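/- The 3×3 Hermitian matrix M = [[1/6, (√2 i)/6, −i/6], [−(√2 i)/6, 0, −√2/6], [i/6, −√2/6, −1/6]] (the CYL-6 average sensing Hamiltonian) has maximal eigenvalue minus minimal eigenvalue strictly greater than 2/3. -/

import Mathlib

open Matrix

noncomputable def Mcyl : Matrix (Fin 3) (Fin 3) ℂ :=
  !![(1/6 : ℂ), (Real.sqrt 2 : ℂ) * Complex.I / 6, -Complex.I/6;
     -(Real.sqrt 2 : ℂ) * Complex.I / 6, 0, -(Real.sqrt 2 : ℂ)/6;
     Complex.I/6, -(Real.sqrt 2 : ℂ)/6, -(1/6 : ℂ)]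

lemma cyl6_cubic (hM : Mcyl.IsHermitian) (i : Fin 3) :
    hM.eigenvalues i = -1/3 ∨ hM.eigenvalues i = (1 - Real.sqrt 3)/6 ∨
      hM.eigenvalues i = (1 + Real.sqrt 3)/6 := by
  set μ := hM.eigenvalues i with hμ
  have hv := hM.mulVec_eigenvectorBasis i
  have hdet : (Mcyl - (μ:ℂ) • 1).det = 0 := by
    apply Matrix.exists_mulVec_eq_zero_iff.mp
    refine ⟨(WithLp.equiv 2 _) (hM.eigenvectorBasis i), ?_, ?_⟩
    · intro h
      apply hM.eigenvectorBasis.toBasis.ne_zero i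
      rw [OrthonormalBasis.coe_toBasis]
      apply (WithLp.equiv 2 _).injective
      simpa using h
    · rw [Matrix.sub_mulVec, WithLp.equiv_apply, hv, Matrix.smul_mulVec, Matrix.one_mulVec]
      ext x
      simp [Pi.smul_apply, Complex.real_smul, ← hμ]
  have hcubic : 54*μ^3 - 9*μ - 1 = 0 := by
    have h2 : ((Real.sqrt 2 : ℂ))^2 = 2 := by
      rw [← Complex.ofReal_pow, Real.sq_sqrt (by norm_num)]; norm_num
    rw [det_fin_three] at hdet
    simp [Mcyl, Matrix.smul_apply, Matrix.one_apply] at hdet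
    ring_nf at hdet
    rw [Complex.I_sq, h2] at hdet
    have key : ((54*μ^3 - 9*μ - 1 : ℝ) : ℂ) = 0 := by
      push_cast
      linear_combination (-54 : ℂ) * hdet
    exact_mod_cast key
  have hs : Real.sqrt 3 ^ 2 = 3 := Real.sq_sqrt (by norm_num)
  have hfact : (3*μ + 1) * (18*μ^2 - 6*μ - 1) = 0 := by linear_combination hcubic
  rcases mul_eq_zero.1 hfact with h | h
  · left; linarith
  · right
    have h2 : (6*μ - 1 - Real.sqrt 3) * (6*μ - 1 + Real.sqrt 3) = 0 := by
      linear_combination 2*h - hs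
    rcases mul_eq_zero.1 h2 with h3 | h3
    · right; linarith
    · left; linarith

lemma cyl6_det : Mcyl.det = ((1/54 : ℝ) : ℂ) := by
  have h2 : ((Real.sqrt 2 : ℂ))^2 = 2 := by
    rw [← Complex.ofReal_pow, Real.sq_sqrt (by norm_num)]; norm_num
  rw [det_fin_three]
  simp [Mcyl]
  ring_nf
  rw [Complex.I_sq, h2]
  norm_num

set_option maxHeartbeats 1000000 in
theorem cyl6_eigenvalue_spread (hM : Mcyl.IsHermitian) :
    (Finset.univ.sup' Finset.univ_nonempty hM.eigenvalues) -
      (Finset.univ.inf' Finset.univ_nonempty hM.eigenvalues) > 2/3 := by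
  have hs : Real.sqrt 3 ^ 2 = 3 := Real.sq_sqrt (by norm_num)
  have hsnn : (0:ℝ) ≤ Real.sqrt 3 := Real.sqrt_nonneg 3
  have hprod : hM.eigenvalues 0 * hM.eigenvalues 1 * hM.eigenvalues 2 = 1/54 := by
    have hd := hM.det_eq_prod_eigenvalues
    rw [cyl6_det, Fin.prod_univ_three] at hd
    have hre := congrArg Complex.re hd
    simpa using hre.symm
  have h0 := cyl6_cubic hM 0
  have h1 := cyl6_cubic hM 1
  have h2 := cyl6_cubic hM 2
  have hsup0 := Finset.le_sup' hM.eigenvalues (Finset.mem_univ (0 : Fin 3))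
  have hsup2 := Finset.le_sup' hM.eigenvalues (Finset.mem_univ (1 : Fin 3))
  have hsup3 := Finset.le_sup' hM.eigenvalues (Finset.mem_univ (2 : Fin 3))
  have hinf0 := Finset.inf'_le hM.eigenvalues (Finset.mem_univ (0 : Fin 3))
  have hinf1 := Finset.inf'_le hM.eigenvalues (Finset.mem_univ (1 : Fin 3))
  have hinf2 := Finset.inf'_le hM.eigenvalues (Finset.mem_univ (2 : Fin 3))
  rcases h0 with h0 | h0 | h0 <;> rcases h1 with h1 | h1 | h1 <;>
    rcases h2 with h2 | h2 | h2 <;>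
    rw [h0, h1, h2] at hprod <;>
    rw [h0] at hsup0 hinf0 <;> rw [h1] at hsup2 hinf1 <;> rw [h2] at hsup3 hinf2 <;>
    nlinarith [hs, hsnn, hsup0, hsup2, hsup3, hinf0, hinf1, hinf2, hprod]
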